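/- arXiv:1712.10017 — 2 statements merged into one kernel-verified Lean document; each statement's English description precedes it below -/
import Mathlib

section
/- Let q = 2^m, i ∈ F_{q^2} with i^2 = i + k, Tr(k) = 1, α = A + iB, β = C + iD with A,B,C,D ∈ F_q, α ≠ 0. Then β = α^{q-1} ∈ F_{q^2} \ F_q, Tr(1 + 1/α^{q+1}) = 0, and α + α^q = β + β^q hold if and only if C = A + B + 1, D = B ≠ 0, A^2 + AB + B^2k + B = 0, and m is odd. -/
/-- The absolute trace `Tr(z) = z + z^2 + z^4 + ⋯ + z^{2^{m-1}}`, computed inside the field. -/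
def traceSum {F : Type*} [Field F] (m : ℕ) (z : F) : F :=
  ∑ j ∈ Finset.range m, z ^ 2 ^ j

lemma traceSum_map {F E : Type*} [Field F] [Field E] (f : F →+* E) (m : ℕ) (z : F) :
    traceSum m (f z) = f (traceSum m z) := by
  simp [traceSum, map_sum, map_pow]

lemma traceSum_add {F : Type*} [Field F] [CharP F 2] (m : ℕ) (a b : F) :
    traceSum m (a + b) = traceSum m a + traceSum m b := by
  haveI : Fact (Nat.Prime 2) := ⟨by norm_num⟩
  simp [traceSum, add_pow_char_pow, Finset.sum_add_distrib]

lemma traceSum_one {F : Type*} [Field F] (m : ℕ) : traceSum m (1 : F) = (m : F) := by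
  simp [traceSum]

lemma traceSum_sq_add {F : Type*} [Field F] [CharP F 2] (m : ℕ) (x : F)
    (hx : x ^ 2 ^ m = x) : traceSum m (x ^ 2 + x) = 0 := by
  haveI : Fact (Nat.Prime 2) := ⟨by norm_num⟩
  have h : ∀ j, (x ^ 2 + x) ^ 2 ^ j = x ^ 2 ^ (j + 1) - x ^ 2 ^ j := by
    intro j
    rw [add_pow_char_pow, ← pow_mul, CharTwo.sub_eq_add, pow_succ, mul_comm (2^j) 2]
  unfold traceSum
  rw [Finset.sum_congr rfl (fun j _ => h j), Finset.sum_range_sub (fun j => x ^ 2 ^ j)]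
  simp [hx, sub_self]

lemma traceSum_succ {F : Type*} [Field F] [CharP F 2] (n : ℕ) (k : F) :
    traceSum (n + 1) k = k + (traceSum n k) ^ 2 := by
  haveI : Fact (Nat.Prime 2) := ⟨by norm_num⟩
  unfold traceSum
  rw [sum_pow_char, Finset.sum_range_succ', pow_zero, pow_one, add_comm]
  congr 1
  exact Finset.sum_congr rfl fun j _ => by rw [← pow_mul, ← pow_succ]

/-- `β = α^{q-1} ∈ F_{q^2} \ F_q`, `Tr(1 + 1/α^{q+1}) = 0` and `α + α^q = β + β^q` hold iff
`C = A + B + 1`, `D = B ≠ 0`, `A^2 + AB + B^2 k + B = 0` and `m` is odd. -/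
theorem stmt_12 {F E : Type*} [Field F] [Fintype F] [Field E] [Fintype E] [Algebra F E]
    (m : ℕ) (hm : 0 < m) (hF : Fintype.card F = 2 ^ m) (hE : Fintype.card E = (2 ^ m) ^ 2)
    (k : F) (hk : traceSum m k = 1) (i : E) (hi : i ^ 2 = i + algebraMap F E k)
    (A B C D : F) (α β : E)
    (hα : α = algebraMap F E A + i * algebraMap F E B)
    (hβ : β = algebraMap F E C + i * algebraMap F E D)
    (hα0 : α ≠ 0) :
    (β = α ^ (2 ^ m - 1) ∧ β ∉ Set.range (algebraMap F E) ∧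
        traceSum m (1 + 1 / α ^ (2 ^ m + 1)) = 0 ∧
        α + α ^ 2 ^ m = β + β ^ 2 ^ m) ↔
      (C = A + B + 1 ∧ D = B ∧ B ≠ 0 ∧ A ^ 2 + A * B + B ^ 2 * k + B = 0 ∧ Odd m) := by
  haveI : Fact (Nat.Prime 2) := ⟨by norm_num⟩
  have h2F : (2 : F) = 0 := by
    have hc : ((Fintype.card F : ℕ) : F) = 0 := Nat.cast_card_eq_zero F
    rw [hF] at hc
    push_cast at hc
    exact pow_eq_zero_iff hm.ne' |>.mp hc
  haveI hcF : CharP F 2 := (CharP.charP_iff_prime_eq_zero (by norm_num)).2 h2F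
  haveI hcE : CharP E 2 := (Algebra.charP_iff F E 2).1 hcF
  have h2E : (2 : E) = 0 := by exact_mod_cast CharP.cast_eq_zero E 2
  set f := algebraMap F E with hf
  have hinj : Function.Injective f := f.injective
  have hq1 : 1 ≤ 2 ^ m := Nat.one_le_two_pow
  have hfrobF : ∀ x : F, x ^ 2 ^ m = x := fun x => by
    rw [← hF]; exact FiniteField.pow_card x
  have hfrob : ∀ x : F, (f x) ^ 2 ^ m = f x := fun x => by
    rw [← map_pow, hfrobF]
  -- i is not in the image of F
  have hiF : i ∉ Set.range f := by
    rintro ⟨y, hy⟩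
    have hky : k = y ^ 2 + y := by
      apply hinj
      rw [map_add, map_pow, hy]
      linear_combination -hi - i * h2E
    have : traceSum m k = 0 := by rw [hky]; exact traceSum_sq_add m y (hfrobF y)
    rw [hk] at this
    exact one_ne_zero this
  -- q-power of i
  have hipow : ∀ n : ℕ, i ^ 2 ^ n = i + f (traceSum n k) := by
    intro n
    induction n with
    | zero => simp [traceSum]
    | succ n ih =>
      have h1 : i ^ 2 ^ (n + 1) = (i ^ 2 ^ n) ^ 2 := by
        rw [← pow_mul, pow_succ]
      rw [h1, ih, add_pow_char, traceSum_succ, map_add, map_pow, hi]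
      ring
  have hiq : i ^ 2 ^ m = i + 1 := by rw [hipow m, hk, map_one]
  -- independence of 1, i
  have hindep : ∀ a b c d : F, f a + i * f b = f c + i * f d → a = c ∧ b = d := by
    intro a b c d h
    by_cases hbd : b = d
    · subst hbd
      refine ⟨hinj ?_, rfl⟩
      have := add_right_cancel h
      exact this
    · exfalso
      apply hiF
      have hdb : d - b ≠ 0 := sub_ne_zero.2 (Ne.symm hbd)
      have hfdb : f (d - b) ≠ 0 := fun hh => hdb (hinj (by rw [hh, map_zero]))
      refine ⟨(a - c) / (d - b), ?_⟩
      rw [map_div₀, div_eq_iff hfdb, map_sub, map_sub]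
      linear_combination h
  have hαq : α ^ 2 ^ m = f (A + B) + i * f B := by
    rw [hα, add_pow_char_pow, mul_pow, hiq, hfrob A, hfrob B, map_add]
    ring
  have hβq : β ^ 2 ^ m = f (C + D) + i * f D := by
    rw [hβ, add_pow_char_pow, mul_pow, hiq, hfrob C, hfrob D, map_add]
    ring
  have hN : α ^ (2 ^ m + 1) = f (A ^ 2 + A * B + k * B ^ 2) := by
    rw [pow_succ, hαq, hα]
    simp only [map_add, map_mul, map_pow]
    linear_combination (f B) ^ 2 * hi + (i * f A * f B + i * (f B) ^ 2) * h2E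
  have hβα : β * α = f (C * A + k * D * B) + i * f (C * B + D * A + D * B) := by
    rw [hβ, hα]
    simp only [map_add, map_mul]
    linear_combination (f D * f B) * hi
  have hpow : α ^ (2 ^ m - 1) * α = α ^ 2 ^ m := by
    rw [← pow_succ, Nat.sub_add_cancel hq1]
  have hfB0 : B ≠ 0 → f B ≠ 0 := fun hB0 hh => hB0 (hinj (by rw [hh, map_zero]))
  constructor
  · rintro ⟨h1, h2, h3, h4⟩
    -- D = B
    have hBD : D = B := by
      rw [hαq, hβq, hα, hβ] at h4
      simp only [map_add] at h4
      refine hinj ?_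
      linear_combination (f A + i * f B - f C - i * f D) * h2E - h4
    rw [hBD] at hβ hβα
    -- B ≠ 0
    have hB0 : B ≠ 0 := by
      rintro rfl
      exact h2 ⟨C, by rw [hβ]; simp⟩
    -- equations from β = α^(q-1)
    have hba : β * α = α ^ 2 ^ m := by rw [h1, hpow]
    rw [hβα, hαq] at hba
    obtain ⟨e1, e2⟩ := hindep _ _ _ _ hba
    have hC : C = A + B + 1 := by
      have h5 : (C + A + B + 1) * B = 0 := by linear_combination e2 + B * h2F
      have h6 := (mul_eq_zero.1 h5).resolve_right hB0
      linear_combination h6 - (A + B + 1) * h2F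
    rw [hC] at e1
    have hquart : A ^ 2 + A * B + B ^ 2 * k + B = 0 := by
      linear_combination e1 + B * h2F
    -- trace computation
    have hNB : α ^ (2 ^ m + 1) = f B := by
      rw [hN]; congr 1; linear_combination hquart - B * h2F
    have hfe : f (1 + B⁻¹) = 1 + 1 / α ^ (2 ^ m + 1) := by
      rw [map_add, map_one, map_inv₀, hNB, one_div]
    have hTr : traceSum m ((1 : F) + B⁻¹) = 0 := by
      apply hinj
      rw [map_zero, ← traceSum_map, hfe]
      exact h3
    have hBinv : B⁻¹ = ((A / B) ^ 2 + A / B) + k := by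
      field_simp
      linear_combination -hquart + B * h2F
    have hTrBinv : traceSum m B⁻¹ = 1 := by
      rw [hBinv, traceSum_add, traceSum_sq_add m (A / B) (hfrobF _), hk, zero_add]
    have hm1 : (m : F) + 1 = 0 := by
      rw [traceSum_add, traceSum_one, hTrBinv] at hTr
      exact hTr
    have hodd : Odd m := by
      rcases Nat.even_or_odd m with he | ho
      · exfalso
        obtain ⟨t, ht⟩ := he
        have hm0 : (m : F) = 0 := by rw [ht]; push_cast; linear_combination (t : F) * h2F
        rw [hm0, zero_add] at hm1
        exact one_ne_zero hm1
      · exact ho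
    exact ⟨hC, hBD, hB0, hquart, hodd⟩
  · rintro ⟨hC, hD, hB0, hquart, hmo⟩
    rw [hD] at hβ hβα hβq
    rw [hC] at hβ hβα hβq
    have hNB : α ^ (2 ^ m + 1) = f B := by
      rw [hN]; congr 1; linear_combination hquart - B * h2F
    have hm1 : (m : F) = 1 := by
      obtain ⟨t, ht⟩ := hmo
      rw [ht]; push_cast; linear_combination (t : F) * h2F
    have hBinv : B⁻¹ = ((A / B) ^ 2 + A / B) + k := by
      field_simp
      linear_combination -hquart + B * h2F
    have hTrBinv : traceSum m B⁻¹ = 1 := by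
      rw [hBinv, traceSum_add, traceSum_sq_add m (A / B) (hfrobF _), hk, zero_add]
    have hβα2 : β * α = α ^ 2 ^ m := by
      rw [hβα, hαq]
      have e1 : (A + B + 1) * A + k * B * B = A + B := by
        linear_combination hquart - B * h2F
      have e2 : (A + B + 1) * B + B * A + B * B = B := by
        linear_combination (A * B + B ^ 2) * h2F
      rw [e1, e2]
    refine ⟨?_, ?_, ?_, ?_⟩
    · exact mul_right_cancel₀ hα0 (hβα2.trans hpow.symm)
    · rintro ⟨y, hy⟩
      apply hiF
      rw [hβ] at hy
      refine ⟨(y - (A + B + 1)) / B, ?_⟩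
      rw [map_div₀, div_eq_iff (hfB0 hB0), map_sub]
      linear_combination hy
    · have hfe : (1 : E) + 1 / α ^ (2 ^ m + 1) = f (1 + B⁻¹) := by
        rw [map_add, map_one, map_inv₀, hNB, one_div]
      rw [hfe, traceSum_map, traceSum_add, traceSum_one, hTrBinv, hm1]
      have h11 : (1 : F) + 1 = 0 := by linear_combination h2F
      rw [h11, map_zero]
    · rw [hαq, hβq, hα, hβ]
      simp only [map_add, map_one]
      linear_combination -(f B + 1) * h2E
end

section
/- Let q = 2^m, k ∈ F_q with Tr(k) = 1, A ∈ F_q, B ∈ F_q^*, C = A + 1, D = B, and suppose A^2 + AB + B^2k = B^2 + B. Then Tr((C^2 + CD + D^2k)/(A^2 + AB + B^2k)) = Tr(1 + 1/B), and Tr(1 + 1/B) = 0 contradicts Tr(k) = 1; hence Tr((C^2+CD+D^2k)/(A^2+AB+B^2k)) = 0 is impossible under these hypotheses. -/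
section aux
variable {F : Type*} [Field F] [Fintype F]

lemma charp2 (m : ℕ) (hm : 0 < m) (hF : Fintype.card F = 2 ^ m) : CharP F 2 := by
  have h : ((2:ℕ):F) ^ m = 0 := by
    have := FiniteField.cast_card_eq_zero F
    rw [hF] at this; push_cast at this ⊢; simpa using this
  have h2 : ((2:ℕ):F) = 0 := pow_eq_zero_iff hm.ne' |>.mp h
  exact (CharP.charP_iff_prime_eq_zero Nat.prime_two).mpr h2

lemma traceSum_add_s15 (m : ℕ) (hm : 0 < m) (hF : Fintype.card F = 2 ^ m) (x y : F) :
    traceSum m (x + y) = traceSum m x + traceSum m y := by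
  have := charp2 m hm hF
  unfold traceSum
  rw [← Finset.sum_add_distrib]
  exact Finset.sum_congr rfl fun j _ => add_pow_char_pow (R:=F) (p:=2) x y j

lemma traceSum_sq (m : ℕ) (hm : 0 < m) (hF : Fintype.card F = 2 ^ m) (x : F) :
    traceSum m (x ^ 2) = traceSum m x := by
  have hfrob : x ^ 2 ^ m = x := by
    have := FiniteField.pow_card x; rwa [hF] at this
  unfold traceSum
  have h1 : ∑ j ∈ Finset.range m, (x ^ 2) ^ 2 ^ j
      = ∑ j ∈ Finset.range m, x ^ 2 ^ (j + 1) := by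
    refine Finset.sum_congr rfl fun j _ => ?_
    rw [← pow_mul, pow_succ, mul_comm]
  rw [h1]
  have h2 : ∑ j ∈ Finset.range (m+1), x ^ 2 ^ j
      = (∑ j ∈ Finset.range m, x ^ 2 ^ (j+1)) + x ^ 2 ^ 0 := Finset.sum_range_succ' _ m
  have h3 : ∑ j ∈ Finset.range (m+1), x ^ 2 ^ j
      = (∑ j ∈ Finset.range m, x ^ 2 ^ j) + x ^ 2 ^ m := Finset.sum_range_succ _ m
  rw [h3, hfrob] at h2
  have h4 : x ^ 2 ^ 0 = x := by norm_num
  rw [h4] at h2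
  exact add_right_cancel h2.symm

end aux

/-- With `C = A + 1`, `D = B` and `A^2 + AB + B^2 k = B^2 + B`, one has
`Tr((C^2+CD+D^2k)/(A^2+AB+B^2k)) = Tr(1 + 1/B)`, and this trace cannot vanish
since `Tr(k) = 1`. -/
theorem stmt_15 {F : Type*} [Field F] [Fintype F] (m : ℕ) (hm : 0 < m)
    (hF : Fintype.card F = 2 ^ m) (k : F) (hk : traceSum m k = 1)
    (A B C D : F) (hB : B ≠ 0) (hC : C = A + 1) (hD : D = B)
    (hyp : A ^ 2 + A * B + B ^ 2 * k = B ^ 2 + B) :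
    traceSum m ((C ^ 2 + C * D + D ^ 2 * k) / (A ^ 2 + A * B + B ^ 2 * k)) =
        traceSum m (1 + 1 / B) ∧
      traceSum m ((C ^ 2 + C * D + D ^ 2 * k) / (A ^ 2 + A * B + B ^ 2 * k)) ≠ 0 := by
  have hc := charp2 m hm hF
  have h2 : (2:F) = 0 := by exact_mod_cast CharP.cast_eq_zero F 2
  have h1 : (1:F) ≠ 0 := one_ne_zero
  -- k = (A/B)^2 + (A/B) + (1 + 1/B)
  have hx : k = (A/B)^2 + (A/B) + (1 + 1/B) := by
    field_simp
    linear_combination hyp - (A^2 + A*B) * h2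
  have htr : traceSum m (1 + 1/B) = 1 := by
    rw [hx] at hk
    rw [traceSum_add_s15 m hm hF, traceSum_add_s15 m hm hF, traceSum_sq m hm hF] at hk
    have h0 : traceSum m (A/B) + traceSum m (A/B) = 0 := by
      rw [← two_mul, h2, zero_mul]
    linear_combination hk - h0
  have hB1 : B + 1 ≠ 0 := by
    intro h
    have hz : (1:F) + 1/B = 0 := by
      have hBeq : B = 1 := by linear_combination h - h2
      rw [hBeq, div_one]; linear_combination h2
    rw [hz] at htr
    simp [traceSum] at htr
  have hden : A ^ 2 + A * B + B ^ 2 * k ≠ 0 := by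
    rw [hyp]
    have : B^2 + B = B * (B+1) := by ring
    rw [this]
    exact mul_ne_zero hB hB1
  have hnum : C ^ 2 + C * D + D ^ 2 * k = (B+1)*(B+1) := by
    rw [hC, hD]; linear_combination hyp + A * h2
  have hratio : (C ^ 2 + C * D + D ^ 2 * k) / (A ^ 2 + A * B + B ^ 2 * k) = 1 + 1/B := by
    rw [hnum, hyp, show B^2 + B = (B+1)*B by ring, mul_div_mul_left _ _ hB1,
      add_div, div_self hB, add_comm]
  rw [hratio, htr]
  exact ⟨rfl, h1⟩
end
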